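/- Let A and B be finite Hopf C*-algebras and ⟨·,·⟩ : A × B → ℂ a non-degenerate bilinear form satisfying only the first three pairing axioms: ⟨Δ_A(a), b₁⊗b₂⟩ = ⟨a, b₁b₂⟩, ⟨a₁⊗a₂, Δ_B(b)⟩ = ⟨a₁a₂, b⟩, and ⟨a*, b⟩ = conj⟨a, S_B(b)*⟩. Then the antipode axiom follows automatically: ⟨S_A(a), b⟩ = ⟨a, S_B(b)⟩ for all a ∈ A, b ∈ B. -/

import Mathlib

noncomputable section
open scoped TensorProduct
open TensorProduct LinearMap

namespace QD

/-! ### Componentwise star on tensor products of star modules over `ℂ` -/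

section StarTensor

variable (A B : Type*) [AddCommGroup A] [AddCommGroup B] [Module ℂ A] [Module ℂ B]
  [StarAddMonoid A] [StarAddMonoid B] [StarModule ℂ A] [StarModule ℂ B]

/-- The componentwise star on a tensor product of star modules over `ℂ`. -/
def starAddHom : A ⊗[ℂ] B →+ A ⊗[ℂ] B :=
  TensorProduct.liftAddHom
    { toFun := fun a =>
        { toFun := fun b => star a ⊗ₜ[ℂ] star b
          map_zero' := by simp
          map_add' := fun b₁ b₂ => by simp [star_add, TensorProduct.tmul_add] }
      map_zero' := by ext b; simp
      map_add' := fun a₁ a₂ => by ext b; simp [star_add, TensorProduct.add_tmul] }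
    fun c a b => by simp [star_smul, TensorProduct.smul_tmul]

instance : StarAddMonoid (A ⊗[ℂ] B) where
  star x := starAddHom A B x
  star_involutive x := by
    show starAddHom A B (starAddHom A B x) = x
    induction x using TensorProduct.induction_on with
    | zero => simp
    | tmul a b => simp [starAddHom]
    | add x y hx hy => rw [map_add, map_add, hx, hy]
  star_add x y := (starAddHom A B).map_add x y

variable {A B}

lemma star_def (x : A ⊗[ℂ] B) : star x = starAddHom A B x := rfl

@[simp] lemma star_tmul (a : A) (b : B) :
    star (a ⊗ₜ[ℂ] b) = (star a) ⊗ₜ[ℂ] (star b) := by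
  simp [star_def, starAddHom]

variable (A B)

instance : StarModule ℂ (A ⊗[ℂ] B) where
  star_smul c x := by
    induction x using TensorProduct.induction_on with
    | zero => rw [smul_zero, star_def, map_zero, smul_zero]
    | tmul a b => rw [TensorProduct.smul_tmul', star_tmul, star_tmul, star_smul,
        TensorProduct.smul_tmul']
    | add x y hx hy =>
      simp only [smul_add, star_def, map_add] at hx hy ⊢
      rw [hx, hy]

end StarTensor

/-! ### Finite Hopf C*-algebras -/

/-- A finite Hopf C*-algebra structure on a finite-dimensional C*-algebra `A`:
a comultiplication, counit and antipode satisfying the Hopf algebra axioms,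
such that the comultiplication and counit are *-homomorphisms and the antipode
satisfies `S(S(a)*)* = a` (and consequently `S² = id`). -/
structure FiniteHopfCStar (A : Type*) [NormedRing A] [StarRing A] [CStarRing A]
    [NormedAlgebra ℂ A] [StarModule ℂ A] [FiniteDimensional ℂ A] where
  /-- The comultiplication. -/
  comul : A →ₗ[ℂ] A ⊗[ℂ] A
  /-- The counit. -/
  counit : A →ₗ[ℂ] ℂ
  /-- The antipode. -/
  antipode : A →ₗ[ℂ] A
  coassoc : ∀ a : A,
    (TensorProduct.assoc ℂ A A A) (LinearMap.rTensor A comul (comul a)) =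
      LinearMap.lTensor A comul (comul a)
  counit_comul : ∀ a : A, (TensorProduct.lid ℂ A) (LinearMap.rTensor A counit (comul a)) = a
  comul_counit : ∀ a : A, (TensorProduct.rid ℂ A) (LinearMap.lTensor A counit (comul a)) = a
  comul_one : comul 1 = 1
  comul_mul : ∀ a b : A, comul (a * b) = comul a * comul b
  counit_one : counit 1 = 1
  counit_mul : ∀ a b : A, counit (a * b) = counit a * counit b
  comul_star : ∀ a : A, comul (star a) = star (comul a)
  counit_star : ∀ a : A, counit (star a) = star (counit a)
  mul_antipode_rTensor_comul : ∀ a : A,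
    LinearMap.mul' ℂ A (LinearMap.rTensor A antipode (comul a)) = counit a • 1
  mul_antipode_lTensor_comul : ∀ a : A,
    LinearMap.mul' ℂ A (LinearMap.lTensor A antipode (comul a)) = counit a • 1
  star_antipode_star_antipode : ∀ a : A, star (antipode (star (antipode a))) = a
  antipode_antipode : ∀ a : A, antipode (antipode a) = a

/-! ### Pairings -/

section Pairing

variable {A B : Type*} [AddCommGroup A] [AddCommGroup B] [Module ℂ A] [Module ℂ B]

/-- The extension of a bilinear pairing `A × B → ℂ` to `(A ⊗ A) × (B ⊗ B) → ℂ`,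
`⟨a₁ ⊗ a₂, b₁ ⊗ b₂⟩ = ⟨a₁, b₁⟩ ⟨a₂, b₂⟩`. -/
def pairT (p : A →ₗ[ℂ] B →ₗ[ℂ] ℂ) :
    A ⊗[ℂ] A →ₗ[ℂ] Module.Dual ℂ (B ⊗[ℂ] B) :=
  TensorProduct.dualDistrib ℂ B B ∘ₗ TensorProduct.map p p

/-- Non-degeneracy of a bilinear pairing. -/
def Nondegenerate (p : A →ₗ[ℂ] B →ₗ[ℂ] ℂ) : Prop :=
  (∀ a : A, (∀ b : B, p a b = 0) → a = 0) ∧ (∀ b : B, (∀ a : A, p a b = 0) → b = 0)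

end Pairing

section Main

variable {A B : Type*}
  [NormedRing A] [StarRing A] [CStarRing A] [NormedAlgebra ℂ A] [StarModule ℂ A]
  [FiniteDimensional ℂ A]
  [NormedRing B] [StarRing B] [CStarRing B] [NormedAlgebra ℂ B] [StarModule ℂ B]
  [FiniteDimensional ℂ B]

variable (hA : FiniteHopfCStar A) (hB : FiniteHopfCStar B) (p : A →ₗ[ℂ] B →ₗ[ℂ] ℂ)

/-- A pairing of finite Hopf C*-algebras. -/
structure IsHopfPairing : Prop where
  pair_comul : ∀ (a : A) (b₁ b₂ : B), pairT p (hA.comul a) (b₁ ⊗ₜ[ℂ] b₂) = p a (b₁ * b₂)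
  pair_mul : ∀ (a₁ a₂ : A) (b : B), pairT p.flip (hB.comul b) (a₁ ⊗ₜ[ℂ] a₂) = p (a₁ * a₂) b
  pair_star : ∀ (a : A) (b : B), p (star a) b = starRingEnd ℂ (p a (star (hB.antipode b)))
  pair_one_right : ∀ a : A, p a 1 = hA.counit a
  pair_one_left : ∀ b : B, p 1 b = hB.counit b
  pair_antipode : ∀ (a : A) (b : B), p (hA.antipode a) b = p a (hB.antipode b)

/-- `a ▷ b = Σ b₍₁₎ ⟨a, b₍₂₎⟩`, the left action of `A` on `B`. -/
def lact (a : A) (b : B) : B :=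
  TensorProduct.rid ℂ B ((LinearMap.lTensor B (p a)) (hB.comul b))

/-- `b ◁ a = Σ ⟨a, b₍₁₎⟩ b₍₂₎`, the right action of `A` on `B`. -/
def ract (b : B) (a : A) : B :=
  TensorProduct.lid ℂ B ((LinearMap.rTensor B (p a)) (hB.comul b))

/-- `b ▷ a = Σ a₍₁₎ ⟨a₍₂₎, b⟩`, the left action of `B` on `A`. -/
def lact' (b : B) (a : A) : A :=
  TensorProduct.rid ℂ A ((LinearMap.lTensor A (p.flip b)) (hA.comul a))

/-- `a ◁ b = Σ ⟨a₍₁₎, b⟩ a₍₂₎`, the right action of `B` on `A`. -/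
def ract' (a : A) (b : B) : A :=
  TensorProduct.lid ℂ A ((LinearMap.rTensor A (p.flip b)) (hA.comul a))

end Main

end QD

namespace QD

section Triples

variable {X : Type*} [NormedRing X] [StarRing X] [CStarRing X] [NormedAlgebra ℂ X]
  [StarModule ℂ X] [FiniteDimensional ℂ X]

/-- The iterated comultiplication `x ↦ Σ x₍₁₎ ⊗ (x₍₂₎ ⊗ x₍₃₎)`. -/
def comul3 (h : FiniteHopfCStar X) : X →ₗ[ℂ] X ⊗[ℂ] (X ⊗[ℂ] X) :=
  LinearMap.lTensor X h.comul ∘ₗ h.comul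

end Triples

section Rot

variable (X : Type*) [AddCommGroup X] [Module ℂ X]

/-- The rearrangement `x₁ ⊗ (x₂ ⊗ x₃) ↦ (x₃ ⊗ x₁) ⊗ x₂`. -/
def rot31 : X ⊗[ℂ] (X ⊗[ℂ] X) →ₗ[ℂ] (X ⊗[ℂ] X) ⊗[ℂ] X :=
  (TensorProduct.comm ℂ X (X ⊗[ℂ] X)).toLinearMap
    ∘ₗ (TensorProduct.assoc ℂ X X X).toLinearMap
    ∘ₗ (TensorProduct.comm ℂ X (X ⊗[ℂ] X)).toLinearMap

/-- The rearrangement `x₁ ⊗ (x₂ ⊗ x₃) ↦ (x₁ ⊗ x₃) ⊗ x₂`. -/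
def rot13 : X ⊗[ℂ] (X ⊗[ℂ] X) →ₗ[ℂ] (X ⊗[ℂ] X) ⊗[ℂ] X :=
  (TensorProduct.assoc ℂ X X X).symm.toLinearMap
    ∘ₗ LinearMap.lTensor X (TensorProduct.comm ℂ X X).toLinearMap

/-- Collapsing scalar factors `(c₁ ⊗ c₂) ⊗ m ↦ (c₁ * c₂) • m`. -/
def collapse : (ℂ ⊗[ℂ] ℂ) ⊗[ℂ] X →ₗ[ℂ] X :=
  (TensorProduct.lid ℂ X).toLinearMap
    ∘ₗ LinearMap.rTensor X (TensorProduct.lid ℂ ℂ).toLinearMap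

end Rot

section Double

variable {A B : Type*}
  [NormedRing A] [StarRing A] [CStarRing A] [NormedAlgebra ℂ A] [StarModule ℂ A]
  [FiniteDimensional ℂ A]
  [NormedRing B] [StarRing B] [CStarRing B] [NormedAlgebra ℂ B] [StarModule ℂ B]
  [FiniteDimensional ℂ B]

variable (hA : FiniteHopfCStar A) (hB : FiniteHopfCStar B) (p : A →ₗ[ℂ] B →ₗ[ℂ] ℂ)

/-- Contraction `((b₃ ⊗ b₁) ⊗ b₂) ⊗ ((a₁ ⊗ a₃) ⊗ a₂) ↦ ⟨a₁, S_B b₃⟩ ⟨a₃, b₁⟩ (a₂ ⊗ b₂)`. -/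
def mulAux : ((B ⊗[ℂ] B) ⊗[ℂ] B) ⊗[ℂ] ((A ⊗[ℂ] A) ⊗[ℂ] A) →ₗ[ℂ] A ⊗[ℂ] B :=
  collapse (A ⊗[ℂ] B)
    ∘ₗ TensorProduct.map
        (TensorProduct.map (TensorProduct.lift (p.flip ∘ₗ hB.antipode))
          (TensorProduct.lift p.flip))
        (TensorProduct.comm ℂ B A).toLinearMap
    ∘ₗ LinearMap.rTensor (B ⊗[ℂ] A)
        (TensorProduct.tensorTensorTensorComm ℂ B B A A).toLinearMap
    ∘ₗ (TensorProduct.tensorTensorTensorComm ℂ (B ⊗[ℂ] B) B (A ⊗[ℂ] A) A).toLinearMap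

/-- The middle part of the quantum double multiplication:
`b ⊗ a' ↦ Σ ⟨a'₍₁₎, S_B⁻¹ b₍₃₎⟩ ⟨a'₍₃₎, b₍₁₎⟩ (a'₍₂₎ ⊗ b₍₂₎)` (recall `S_B⁻¹ = S_B`). -/
def mdMid : B ⊗[ℂ] A →ₗ[ℂ] A ⊗[ℂ] B :=
  mulAux hB p ∘ₗ
    TensorProduct.map (rot31 B ∘ₗ comul3 hB) (rot13 A ∘ₗ comul3 hA)

/-- The multiplication of the quantum double `D(A,B)`:
`(a ⊗ b) (a' ⊗ b') = Σ ⟨a'₍₁₎, S_B⁻¹ b₍₃₎⟩ ⟨a'₍₃₎, b₍₁₎⟩ (a a'₍₂₎ ⊗ b₍₂₎ b')`. -/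
def mD : (A ⊗[ℂ] B) ⊗[ℂ] (A ⊗[ℂ] B) →ₗ[ℂ] A ⊗[ℂ] B :=
  (LinearMap.mul' ℂ (A ⊗[ℂ] B) ∘ₗ
      LinearMap.rTensor (A ⊗[ℂ] B)
        (Algebra.TensorProduct.includeLeft : A →ₐ[ℂ] A ⊗[ℂ] B).toLinearMap)
    ∘ₗ LinearMap.lTensor A
        ((LinearMap.mul' ℂ (A ⊗[ℂ] B) ∘ₗ
            LinearMap.lTensor (A ⊗[ℂ] B)
              (Algebra.TensorProduct.includeRight : B →ₐ[ℂ] A ⊗[ℂ] B).toLinearMap)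
          ∘ₗ LinearMap.rTensor B (mdMid hA hB p))
    ∘ₗ LinearMap.lTensor A (TensorProduct.assoc ℂ B A B).symm.toLinearMap
    ∘ₗ (TensorProduct.assoc ℂ A B (A ⊗[ℂ] B)).toLinearMap

/-- The comultiplication of the quantum double. -/
def ΔD : A ⊗[ℂ] B →ₗ[ℂ] (A ⊗[ℂ] B) ⊗[ℂ] (A ⊗[ℂ] B) :=
  (TensorProduct.tensorTensorTensorComm ℂ A A B B).toLinearMap
    ∘ₗ TensorProduct.map hA.comul hB.comul

/-- The tensor product of two linear functionals, as a functional on the tensor product. -/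
def funcT (φA : A →ₗ[ℂ] ℂ) (φB : B →ₗ[ℂ] ℂ) : A ⊗[ℂ] B →ₗ[ℂ] ℂ :=
  (TensorProduct.lid ℂ ℂ).toLinearMap ∘ₗ TensorProduct.map φA φB

/-- The counit of the quantum double. -/
def εD : A ⊗[ℂ] B →ₗ[ℂ] ℂ := funcT hA.counit hB.counit

/-- The antipode of the quantum double:
`S_D (a ⊗ b) = Σ ⟨a₍₁₎, S_B b₍₃₎⟩ ⟨a₍₃₎, b₍₁₎⟩ (S_A a₍₂₎ ⊗ S_B b₍₂₎)`. -/
def SD : A ⊗[ℂ] B →ₗ[ℂ] A ⊗[ℂ] B :=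
  TensorProduct.map hA.antipode hB.antipode ∘ₗ mdMid hA hB p
    ∘ₗ (TensorProduct.comm ℂ A B).toLinearMap

/-- Contraction `(u₁ ⊗ (u₂ ⊗ u₃)) ⊗ (v₁ ⊗ (v₂ ⊗ v₃)) ↦ ⟨u₃, v₁⟩ ⟨u₁, v₃⟩ (u₂ ⊗ v₂)`. -/
def starContract : (A ⊗[ℂ] (A ⊗[ℂ] A)) ⊗[ℂ] (B ⊗[ℂ] (B ⊗[ℂ] B)) →ₗ[ℂ] A ⊗[ℂ] B :=
  collapse (A ⊗[ℂ] B)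
    ∘ₗ LinearMap.rTensor (A ⊗[ℂ] B)
        (TensorProduct.map (TensorProduct.lift p) (TensorProduct.lift p))
    ∘ₗ LinearMap.rTensor (A ⊗[ℂ] B)
        (TensorProduct.tensorTensorTensorComm ℂ A A B B).toLinearMap
    ∘ₗ (TensorProduct.tensorTensorTensorComm ℂ (A ⊗[ℂ] A) A (B ⊗[ℂ] B) B).toLinearMap
    ∘ₗ TensorProduct.map (rot31 A) (rot13 B)

/-- The involution of the quantum double:
`(a ⊗ b)* = Σ ⟨a₍₃₎*, b₍₁₎*⟩ ⟨a₍₁₎*, (S_B b₍₃₎)*⟩ (a₍₂₎* ⊗ b₍₂₎*)`,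
extended conjugate-linearly. -/
def starD (x : A ⊗[ℂ] B) : A ⊗[ℂ] B :=
  starContract p
    (star ((TensorProduct.map (comul3 hA)
        (LinearMap.lTensor B (LinearMap.lTensor B hB.antipode) ∘ₗ comul3 hB)) x))

/-- The composite of `starD` with the componentwise star, a linear map. -/
def starDbar : A ⊗[ℂ] B →ₗ[ℂ] A ⊗[ℂ] B where
  toFun x := star (starD hA hB p x)
  map_add' x y := by
    simp only [starD]
    simp only [map_add, star_def]
  map_smul' c x := by
    simp only [starD, map_smul, star_smul, RingHom.id_apply, starRingEnd_apply, star_star]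

end Double

end QD

namespace QD

variable {A B : Type*}
  [NormedRing A] [StarRing A] [CStarRing A] [NormedAlgebra ℂ A] [StarModule ℂ A]
  [FiniteDimensional ℂ A]
  [NormedRing B] [StarRing B] [CStarRing B] [NormedAlgebra ℂ B] [StarModule ℂ B]
  [FiniteDimensional ℂ B]

section AntipodeAux

variable {A' B' : Type*} [AddCommGroup A'] [AddCommGroup B'] [Module ℂ A'] [Module ℂ B']

/-- The mixed double pairing `⟨a₁ ⊗ a₂, b₁ ⊗ b₂⟩ = f a₁ b₁ * g a₂ b₂`. -/
def dpair (f g : A' →ₗ[ℂ] B' →ₗ[ℂ] ℂ) : A' ⊗[ℂ] A' →ₗ[ℂ] Module.Dual ℂ (B' ⊗[ℂ] B') :=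
  TensorProduct.dualDistrib ℂ B' B' ∘ₗ TensorProduct.map f g

@[simp] lemma dpair_tmul (f g : A' →ₗ[ℂ] B' →ₗ[ℂ] ℂ) (a₁ a₂ : A') (b₁ b₂ : B') :
    dpair f g (a₁ ⊗ₜ[ℂ] a₂) (b₁ ⊗ₜ[ℂ] b₂) = f a₁ b₁ * g a₂ b₂ := by
  simp [dpair]

lemma pairT_eq_dpair (f : A' →ₗ[ℂ] B' →ₗ[ℂ] ℂ) : pairT f = dpair f f := rfl

/-- The triple pairing built from a form and a double pairing. -/
def tpair (f : A' →ₗ[ℂ] B' →ₗ[ℂ] ℂ)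
    (m : A' ⊗[ℂ] A' →ₗ[ℂ] Module.Dual ℂ (B' ⊗[ℂ] B')) :
    A' ⊗[ℂ] (A' ⊗[ℂ] A') →ₗ[ℂ] Module.Dual ℂ (B' ⊗[ℂ] (B' ⊗[ℂ] B')) :=
  TensorProduct.dualDistrib ℂ B' (B' ⊗[ℂ] B') ∘ₗ TensorProduct.map f m

@[simp] lemma tpair_tmul (f : A' →ₗ[ℂ] B' →ₗ[ℂ] ℂ)
    (m : A' ⊗[ℂ] A' →ₗ[ℂ] Module.Dual ℂ (B' ⊗[ℂ] B'))
    (a : A') (t : A' ⊗[ℂ] A') (b : B') (u : B' ⊗[ℂ] B') :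
    tpair f m (a ⊗ₜ[ℂ] t) (b ⊗ₜ[ℂ] u) = f a b * m t u := by
  simp [tpair]

end AntipodeAux

set_option maxHeartbeats 2000000 in
set_option synthInstance.maxHeartbeats 400000 in
/-- Remark 2.6 (2), second part: for a non-degenerate bilinear form satisfying the first
three pairing axioms, the antipode axiom follows automatically. -/
theorem stmt_6 (hA : FiniteHopfCStar A) (hB : FiniteHopfCStar B)
    (p : A →ₗ[ℂ] B →ₗ[ℂ] ℂ) (hnd : Nondegenerate p)
    (h1 : ∀ (a : A) (b₁ b₂ : B), pairT p (hA.comul a) (b₁ ⊗ₜ[ℂ] b₂) = p a (b₁ * b₂))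
    (h2 : ∀ (a₁ a₂ : A) (b : B), pairT p.flip (hB.comul b) (a₁ ⊗ₜ[ℂ] a₂) = p (a₁ * a₂) b)
    (h3 : ∀ (a : A) (b : B), p (star a) b = starRingEnd ℂ (p a (star (hB.antipode b)))) :
    ∀ (a : A) (b : B), p (hA.antipode a) b = p a (hB.antipode b) := by
  clear h3
  set F : A →ₗ[ℂ] B →ₗ[ℂ] ℂ := p ∘ₗ hA.antipode with hFdef
  set G : A →ₗ[ℂ] B →ₗ[ℂ] ℂ := LinearMap.lcomp ℂ ℂ hB.antipode ∘ₗ p with hGdef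
  set E : A →ₗ[ℂ] B →ₗ[ℂ] ℂ := hA.counit.smulRight hB.counit with hEdef
  -- Step 1: `p 1 b = ε_B b`.
  have key_l : ∀ (u : B ⊗[ℂ] B) (a : A),
      p a ((TensorProduct.lid ℂ B) (LinearMap.rTensor B (p 1) u)) =
        pairT p.flip u ((1 : A) ⊗ₜ[ℂ] a) := by
    intro u a
    induction u using TensorProduct.induction_on with
    | zero => simp
    | tmul b₁ b₂ =>
        simp [pairT, TensorProduct.dualDistrib_apply, smul_eq_mul]
    | add x y hx hy => simp only [map_add, LinearMap.add_apply, hx, hy]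
  have rep_l : ∀ b : B,
      (TensorProduct.lid ℂ B) (LinearMap.rTensor B (p 1) (hB.comul b)) = b := by
    intro b
    have hz : (TensorProduct.lid ℂ B) (LinearMap.rTensor B (p 1) (hB.comul b)) - b = 0 := by
      apply hnd.2
      intro a
      rw [map_sub, key_l, h2, one_mul, sub_self]
    exact sub_eq_zero.mp hz
  have cnt_l : ∀ u : B ⊗[ℂ] B,
      hB.counit ((TensorProduct.lid ℂ B) (LinearMap.rTensor B (p 1) u)) =
        p 1 ((TensorProduct.rid ℂ B) (LinearMap.lTensor B hB.counit u)) := by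
    intro u
    induction u using TensorProduct.induction_on with
    | zero => simp
    | tmul b₁ b₂ => simp [smul_eq_mul, mul_comm]
    | add x y hx hy => simp only [map_add, hx, hy]
  have pone_l : ∀ b : B, p 1 b = hB.counit b := by
    intro b
    have h := cnt_l (hB.comul b)
    rw [rep_l b, hB.comul_counit b] at h
    exact h.symm
  -- Step 2: `p a 1 = ε_A a`.
  have key_r : ∀ (t : A ⊗[ℂ] A) (b : B),
      p ((TensorProduct.rid ℂ A) (LinearMap.lTensor A (p.flip 1) t)) b =
        pairT p t (b ⊗ₜ[ℂ] (1 : B)) := by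
    intro t b
    induction t using TensorProduct.induction_on with
    | zero => simp
    | tmul x y =>
        simp [pairT, TensorProduct.dualDistrib_apply, smul_eq_mul, mul_comm]
    | add x y hx hy => simp only [map_add, LinearMap.add_apply, hx, hy]
  have rep_r : ∀ a : A,
      (TensorProduct.rid ℂ A) (LinearMap.lTensor A (p.flip 1) (hA.comul a)) = a := by
    intro a
    have hz : (TensorProduct.rid ℂ A) (LinearMap.lTensor A (p.flip 1) (hA.comul a)) - a = 0 := by
      apply hnd.1
      intro b
      rw [map_sub, LinearMap.sub_apply, key_r, h1, mul_one, sub_self]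
    exact sub_eq_zero.mp hz
  have cnt_r : ∀ t : A ⊗[ℂ] A,
      hA.counit ((TensorProduct.rid ℂ A) (LinearMap.lTensor A (p.flip 1) t)) =
        p ((TensorProduct.lid ℂ A) (LinearMap.rTensor A hA.counit t)) 1 := by
    intro t
    induction t using TensorProduct.induction_on with
    | zero => simp
    | tmul x y => simp [smul_eq_mul, mul_comm]
    | add x y hx hy => simp only [map_add, LinearMap.add_apply, hx, hy]
  have pone_r : ∀ a : A, p a 1 = hA.counit a := by
    intro a
    have h := cnt_r (hA.comul a)
    rw [rep_r a, hA.counit_comul a] at h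
    exact h.symm
  -- Step 3: the two convolution-inverse identities.
  have flip_eq : ∀ (u : B ⊗[ℂ] B) (x y : A),
      pairT p.flip u (x ⊗ₜ[ℂ] y) = dpair p p (x ⊗ₜ[ℂ] y) u := by
    intro u x y
    induction u using TensorProduct.induction_on with
    | zero => simp
    | tmul b₁ b₂ => simp [pairT, dpair, TensorProduct.dualDistrib_apply]
    | add v w hv hw => simp only [map_add, LinearMap.add_apply, hv, hw]
  have L1' : ∀ (t : A ⊗[ℂ] A) (b : B),
      dpair F p t (hB.comul b) =
        p (LinearMap.mul' ℂ A (LinearMap.rTensor A hA.antipode t)) b := by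
    intro t b
    induction t using TensorProduct.induction_on with
    | zero => simp
    | tmul x y =>
        have e1 : dpair F p (x ⊗ₜ[ℂ] y) = dpair p p (hA.antipode x ⊗ₜ[ℂ] y) := by
          simp [dpair, hFdef]
        rw [e1, ← flip_eq, h2]
        simp
    | add x y hx hy =>
        simp only [map_add, LinearMap.add_apply, hx, hy]
  have L1 : ∀ (a : A) (b : B),
      dpair F p (hA.comul a) (hB.comul b) = hA.counit a * hB.counit b := by
    intro a b
    rw [L1' (hA.comul a) b, hA.mul_antipode_rTensor_comul a, map_smul,
      LinearMap.smul_apply, pone_l b, smul_eq_mul]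
  have dpG : ∀ (t : A ⊗[ℂ] A) (x y : B),
      dpair p G t (x ⊗ₜ[ℂ] y) = pairT p t (x ⊗ₜ[ℂ] hB.antipode y) := by
    intro t x y
    induction t using TensorProduct.induction_on with
    | zero => simp
    | tmul a₁ a₂ => simp [dpair, pairT, TensorProduct.dualDistrib_apply, hGdef]
    | add v w hv hw => simp only [map_add, LinearMap.add_apply, hv, hw]
  have L2' : ∀ (u : B ⊗[ℂ] B) (a : A),
      dpair p G (hA.comul a) u =
        p a (LinearMap.mul' ℂ B (LinearMap.lTensor B hB.antipode u)) := by
    intro u a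
    induction u using TensorProduct.induction_on with
    | zero => simp
    | tmul x y =>
        rw [dpG, h1]
        simp
    | add x y hx hy => simp only [map_add, hx, hy]
  have L2 : ∀ (a : A) (b : B),
      dpair p G (hA.comul a) (hB.comul b) = hA.counit a * hB.counit b := by
    intro a b
    rw [L2' (hB.comul b) a, hB.mul_antipode_lTensor_comul b, map_smul, smul_eq_mul,
      pone_r a, mul_comm]
  -- Step 4: the triple pairing evaluated at the iterated comultiplications, grouped
  -- on the right (Claim A) and on the left (Claim B).
  have A1 : ∀ (t : A ⊗[ℂ] A) (u : B ⊗[ℂ] B),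
      tpair F (dpair p G) (LinearMap.lTensor A hA.comul t) (LinearMap.lTensor B hB.comul u) =
        dpair F E t u := by
    intro t u
    induction t using TensorProduct.induction_on with
    | zero => simp
    | tmul a₁ a₂ =>
        induction u using TensorProduct.induction_on with
        | zero => simp
        | tmul b₁ b₂ =>
            rw [LinearMap.lTensor_tmul, LinearMap.lTensor_tmul, tpair_tmul, L2, dpair_tmul]
            simp [hEdef, smul_eq_mul]
        | add v w hv hw => simp only [map_add, hv, hw]
    | add v w hv hw => simp only [map_add, LinearMap.add_apply, hv, hw]
  have A2 : ∀ (t : A ⊗[ℂ] A) (u : B ⊗[ℂ] B),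
      dpair F E t u =
        F ((TensorProduct.rid ℂ A) (LinearMap.lTensor A hA.counit t))
          ((TensorProduct.rid ℂ B) (LinearMap.lTensor B hB.counit u)) := by
    intro t u
    induction t using TensorProduct.induction_on with
    | zero => simp
    | tmul a₁ a₂ =>
        induction u using TensorProduct.induction_on with
        | zero => simp
        | tmul b₁ b₂ =>
            simp only [dpair_tmul, LinearMap.lTensor_tmul, TensorProduct.rid_tmul,
              map_smul, LinearMap.smul_apply, smul_eq_mul, hEdef, LinearMap.smulRight_apply]
            ring
        | add v w hv hw => simp only [map_add, hv, hw]
    | add v w hv hw => simp only [map_add, LinearMap.add_apply, hv, hw]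
  have claimA : ∀ (a : A) (b : B),
      tpair F (dpair p G) (comul3 hA a) (comul3 hB b) = F a b := by
    intro a b
    have e : comul3 hA a = LinearMap.lTensor A hA.comul (hA.comul a) := rfl
    have e' : comul3 hB b = LinearMap.lTensor B hB.comul (hB.comul b) := rfl
    rw [e, e', A1, A2, hA.comul_counit, hB.comul_counit]
  have B0 : ∀ (s : A ⊗[ℂ] A) (x : A) (u : B ⊗[ℂ] B) (y : B),
      tpair F (dpair p G) ((TensorProduct.assoc ℂ A A A) (s ⊗ₜ[ℂ] x))
          ((TensorProduct.assoc ℂ B B B) (u ⊗ₜ[ℂ] y)) =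
        dpair F p s u * G x y := by
    intro s x u y
    induction s using TensorProduct.induction_on with
    | zero => simp
    | tmul x₁ x₂ =>
        induction u using TensorProduct.induction_on with
        | zero => simp
        | tmul y₁ y₂ =>
            rw [TensorProduct.assoc_tmul, TensorProduct.assoc_tmul, tpair_tmul,
              dpair_tmul, dpair_tmul]
            ring
        | add u₁ u₂ hu₁ hu₂ =>
            simp only [TensorProduct.add_tmul, map_add, LinearMap.add_apply, hu₁, hu₂, add_mul]
    | add s₁ s₂ hs₁ hs₂ =>
        simp only [TensorProduct.add_tmul, map_add, LinearMap.add_apply, hs₁, hs₂, add_mul]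
  have B1 : ∀ (t : A ⊗[ℂ] A) (u : B ⊗[ℂ] B),
      tpair F (dpair p G)
          ((TensorProduct.assoc ℂ A A A) (LinearMap.rTensor A hA.comul t))
          ((TensorProduct.assoc ℂ B B B) (LinearMap.rTensor B hB.comul u)) =
        dpair E G t u := by
    intro t u
    induction t using TensorProduct.induction_on with
    | zero => simp
    | tmul a₁ a₂ =>
        induction u using TensorProduct.induction_on with
        | zero => simp
        | tmul b₁ b₂ =>
            rw [LinearMap.rTensor_tmul, LinearMap.rTensor_tmul, B0, L1, dpair_tmul]
            simp [hEdef, smul_eq_mul]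
        | add v w hv hw => simp only [map_add, hv, hw]
    | add v w hv hw => simp only [map_add, LinearMap.add_apply, hv, hw]
  have B2 : ∀ (t : A ⊗[ℂ] A) (u : B ⊗[ℂ] B),
      dpair E G t u =
        G ((TensorProduct.lid ℂ A) (LinearMap.rTensor A hA.counit t))
          ((TensorProduct.lid ℂ B) (LinearMap.rTensor B hB.counit u)) := by
    intro t u
    induction t using TensorProduct.induction_on with
    | zero => simp
    | tmul a₁ a₂ =>
        induction u using TensorProduct.induction_on with
        | zero => simp
        | tmul b₁ b₂ =>
            simp only [dpair_tmul, LinearMap.rTensor_tmul, TensorProduct.lid_tmul,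
              map_smul, LinearMap.smul_apply, smul_eq_mul, hEdef, LinearMap.smulRight_apply]
            ring
        | add v w hv hw => simp only [map_add, hv, hw]
    | add v w hv hw => simp only [map_add, LinearMap.add_apply, hv, hw]
  have claimB : ∀ (a : A) (b : B),
      tpair F (dpair p G) (comul3 hA a) (comul3 hB b) = G a b := by
    intro a b
    have e : comul3 hA a =
        (TensorProduct.assoc ℂ A A A) (LinearMap.rTensor A hA.comul (hA.comul a)) :=
      (hA.coassoc a).symm
    have e' : comul3 hB b =
        (TensorProduct.assoc ℂ B B B) (LinearMap.rTensor B hB.comul (hB.comul b)) :=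
      (hB.coassoc b).symm
    rw [e, e', B1, B2, hA.counit_comul, hB.counit_comul]
  -- Conclusion.
  intro a b
  have h := (claimA a b).symm.trans (claimB a b)
  simpa [hFdef, hGdef] using h
end QD
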